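/- If P = Δ_{k_1} ×_{Δ_{m_1}} Δ_{k_2} ×_{Δ_{m_2}} … ×_{Δ_{m_t}} Δ_{k_{t+1}} is an iterated fiber product of free commutative monoids over free commutative monoids, where each structure map sends generators to generators, then the toric ideal of ℂ[P] with respect to the fiber-product generating set has a quadratic, square-free Gröbner basis consisting of swap relations; in particular ℂ[P] is a Koszul algebra. -/

import Mathlib

open MvPolynomial

section

variable {t : ℕ} (G : Fin (t + 1) → Type) (B : Fin t → Type)
  (rB : (s : Fin t) → G s.castSucc → B s) (lB : (s : Fin t) → G s.succ → B s)

/-- Fiber-product generators: tuples of generators of the free factors whose images in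
each base agree. -/
def GenP : Type :=
  {g : (s : Fin (t + 1)) → G s // ∀ s : Fin t, rB s (g s.castSucc) = lB s (g s.succ)}

/-- The iterated toric fiber product of the free commutative monoids on the `G s` over
the free commutative monoids on the `B s`, inside the ambient product monoid. -/
noncomputable def fiberP : AddSubmonoid ((s : Fin (t + 1)) → (G s →₀ ℕ)) where
  carrier := {x | ∀ s : Fin t,
    Finsupp.mapDomain (rB s) (x s.castSucc) = Finsupp.mapDomain (lB s) (x s.succ)}
  zero_mem' := by intro s; simp
  add_mem' := by
    intro x y hx hy s
    simp only [Pi.add_apply, Finsupp.mapDomain_add, hx s, hy s]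

/-- A fiber-product generator as an element of the ambient monoid. -/
noncomputable def embG (g : GenP G B rB lB) : (s : Fin (t + 1)) → (G s →₀ ℕ) :=
  fun s => Finsupp.single (g.val s) 1

/-- The toric presentation map `ℂ[x_g : g ∈ GenP] → ℂ[fiber product]`. -/
noncomputable def toricMap :
    MvPolynomial (GenP G B rB lB) ℂ →ₐ[ℂ] AddMonoidAlgebra ℂ ((s : Fin (t + 1)) → (G s →₀ ℕ)) :=
  MvPolynomial.aeval (fun g => (AddMonoidAlgebra.single (embG G B rB lB g) 1 :
    AddMonoidAlgebra ℂ ((s : Fin (t + 1)) → (G s →₀ ℕ))))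

/-- The swap relations: for generating tuples `g, h` sharing a boundary label at the
gluing coordinate `c`, the binomial `x_g x_h - x_{g'} x_{h'}` where `g', h'` exchange
the tails of `g, h` after `c`. -/
def swapPolys : Set (MvPolynomial (GenP G B rB lB) ℂ) :=
  {f | ∃ g h g' h' : GenP G B rB lB, ∃ c : Fin t,
    rB c (g.val c.castSucc) = rB c (h.val c.castSucc) ∧
    (∀ s, g'.val s = if (s : ℕ) ≤ (c : ℕ) then g.val s else h.val s) ∧
    (∀ s, h'.val s = if (s : ℕ) ≤ (c : ℕ) then h.val s else g.val s) ∧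
    f = X g * X h - X g' * X h'}

/-! ### Auxiliary material for the proof -/

section Aux

variable {G B rB lB}

instance : WellFoundedLT (Fin (t + 1)) := inferInstance

/-- The marginal collection of a monomial exponent. -/
noncomputable def Phi (u : GenP G B rB lB →₀ ℕ) : (s : Fin (t + 1)) → (G s →₀ ℕ) :=
  fun s => Finsupp.mapDomain (fun g : GenP G B rB lB => g.val s) u

theorem Phi_apply (u : GenP G B rB lB →₀ ℕ) (s : Fin (t+1)) :
    Phi u s = Finsupp.mapDomain (fun g : GenP G B rB lB => g.val s) u := rfl

/-- The tail-exchange of two generators crossing at `c`. -/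
def mix (g h : GenP G B rB lB) (c : Fin t)
    (hc : rB c (g.val c.castSucc) = rB c (h.val c.castSucc)) : GenP G B rB lB :=
  ⟨fun s => if (s : ℕ) ≤ (c : ℕ) then g.val s else h.val s, by
    intro s
    show rB s (if ((s.castSucc : Fin (t+1)) : ℕ) ≤ (c : ℕ) then _ else _)
        = lB s (if ((s.succ : Fin (t+1)) : ℕ) ≤ (c : ℕ) then _ else _)
    rcases le_or_gt ((s.succ : Fin (t+1)) : ℕ) (c : ℕ) with h1 | h1
    · have h2 : ((s.castSucc : Fin (t+1)) : ℕ) ≤ (c : ℕ) := by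
        simp only [Fin.coe_castSucc, Fin.val_succ] at h1 ⊢; omega
      rw [if_pos h1, if_pos h2]
      exact g.2 s
    · rcases le_or_gt ((s.castSucc : Fin (t+1)) : ℕ) (c : ℕ) with h2 | h2
      · have hsc : s = c := by
          apply Fin.ext
          simp only [Fin.coe_castSucc, Fin.val_succ] at h1 h2; omega
        subst hsc
        rw [if_pos h2, if_neg (not_le.mpr h1)]
        exact hc.trans (h.2 s)
      · rw [if_neg (not_le.mpr h2), if_neg (not_le.mpr h1)]
        exact h.2 s⟩

theorem mix_val (g h : GenP G B rB lB) (c : Fin t) (hc) (s : Fin (t+1)) :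
    (mix g h c hc).val s = if (s : ℕ) ≤ (c : ℕ) then g.val s else h.val s := rfl

set_option linter.unusedSectionVars false

variable [ordG : ∀ s, LinearOrder (G s)]

noncomputable instance genPLinearOrder : LinearOrder (GenP G B rB lB) :=
  LinearOrder.lift' (fun g => (toLex g.val : Lex ((s : Fin (t+1)) → G s)))
    (fun _ _ h => Subtype.ext (toLex.injective h))

theorem genP_lt_iff' {g h : GenP G B rB lB} : g < h ↔ toLex g.val < toLex h.val := Iff.rfl

theorem genP_lt_def {g h : GenP G B rB lB} :
    g < h ↔ ∃ j₀ : Fin (t+1), (∀ j, j < j₀ → g.val j = h.val j) ∧ g.val j₀ < h.val j₀ :=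
  genP_lt_iff'.trans Iff.rfl

theorem genP_lt_intro {g h : GenP G B rB lB} (j₀ : Fin (t+1))
    (hpre : ∀ j, j < j₀ → g.val j = h.val j) (hj : g.val j₀ < h.val j₀) : g < h :=
  genP_lt_def.mpr ⟨j₀, hpre, hj⟩

theorem genP_exists_min_diff {g h : GenP G B rB lB} (n : ℕ)
    (hne : ∃ j : Fin (t+1), (j : ℕ) < n ∧ g.val j ≠ h.val j) :
    ∃ j₀ : Fin (t+1), (j₀ : ℕ) < n ∧ g.val j₀ ≠ h.val j₀ ∧
      ∀ j, j < j₀ → g.val j = h.val j := by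
  classical
  set D := Finset.univ.filter (fun j : Fin (t+1) => (j : ℕ) < n ∧ g.val j ≠ h.val j) with hD
  have hDne : D.Nonempty := by
    obtain ⟨j, hj1, hj2⟩ := hne
    exact ⟨j, by simp [hD, hj1, hj2]⟩
  have hmem := D.min'_mem hDne
  simp only [hD, Finset.mem_filter, Finset.mem_univ, true_and] at hmem
  refine ⟨D.min' hDne, hmem.1, hmem.2, ?_⟩
  intro j hj
  by_contra hne'
  have hjn : (j : ℕ) < n := lt_trans (by exact_mod_cast hj) hmem.1
  have hjD : j ∈ D := by simp [hD, hjn, hne']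
  exact absurd (D.min'_le j hjD) (not_le.mpr hj)

/-- `Bad u`: some swap whose leading pair is contained in `u`. -/
def Bad (u : GenP G B rB lB →₀ ℕ) : Prop :=
  ∃ (g h : GenP G B rB lB) (c : Fin t)
    (hc : rB c (g.val c.castSucc) = rB c (h.val c.castSucc)),
    (Finsupp.single g 1 + Finsupp.single h 1) ≤ u ∧
    toLex (Finsupp.single (mix g h c hc) 1 + Finsupp.single (mix h g c hc.symm) 1)
      < toLex (Finsupp.single g 1 + Finsupp.single h 1)

open scoped Classical in
/-- count of a predicate in a multiset of generators -/
noncomputable def cnt (P : GenP G B rB lB → Prop) (u : GenP G B rB lB →₀ ℕ) : ℕ :=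
  ∑ g ∈ u.support, if P g then u g else 0

theorem cnt_congr {P Q : GenP G B rB lB → Prop} (h : ∀ g, P g ↔ Q g)
    (u : GenP G B rB lB →₀ ℕ) : cnt P u = cnt Q u := by
  have : P = Q := funext fun g => propext (h g)
  subst this; rfl

theorem cnt_split (P Q : GenP G B rB lB → Prop) (u : GenP G B rB lB →₀ ℕ) :
    cnt P u = cnt (fun g => P g ∧ Q g) u + cnt (fun g => P g ∧ ¬ Q g) u := by
  classical
  unfold cnt
  rw [← Finset.sum_add_distrib]
  refine Finset.sum_congr rfl fun g _ => ?_
  by_cases hP : P g <;> by_cases hQ : Q g <;> simp [hP, hQ]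

theorem cnt_zero_of {P : GenP G B rB lB → Prop} {u : GenP G B rB lB →₀ ℕ}
    (h : ∀ g, P g → u g = 0) : cnt P u = 0 := by
  classical
  unfold cnt
  refine Finset.sum_eq_zero fun g _ => ?_
  by_cases hP : P g
  · simp [hP, h g hP]
  · simp [hP]

theorem cnt_mono {P Q : GenP G B rB lB → Prop} (h : ∀ g, P g → Q g)
    (u : GenP G B rB lB →₀ ℕ) : cnt P u ≤ cnt Q u := by
  classical
  unfold cnt
  refine Finset.sum_le_sum fun g _ => ?_
  by_cases hP : P g
  · simp [hP, h g hP]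
  · simp [hP]

theorem cnt_mono' {P Q : GenP G B rB lB → Prop} {u : GenP G B rB lB →₀ ℕ}
    (h : ∀ g ∈ u.support, P g → Q g) : cnt P u ≤ cnt Q u := by
  classical
  unfold cnt
  refine Finset.sum_le_sum fun g hg => ?_
  by_cases hP : P g
  · simp [hP, h g hg hP]
  · simp [hP]

theorem cnt_exists_pos {P : GenP G B rB lB → Prop} {u : GenP G B rB lB →₀ ℕ}
    (h : cnt P u ≠ 0) : ∃ g ∈ u.support, P g := by
  by_contra hcon
  push_neg at hcon
  exact h (by
    classical
    unfold cnt
    exact Finset.sum_eq_zero fun g hg => by simp [hcon g hg])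

theorem cnt_eq_single (g₀ : GenP G B rB lB) (u : GenP G B rB lB →₀ ℕ) :
    cnt (fun g => g = g₀) u = u g₀ := by
  classical
  unfold cnt
  rw [Finset.sum_eq_single g₀ (fun b _ hne => by simp [hne])
    (fun h => by simp [Finsupp.notMem_support_iff.mp h])]
  simp

theorem cnt_transport {u v : GenP G B rB lB →₀ ℕ} (h : Phi u = Phi v)
    (s : Fin (t+1)) (S : G s → Prop) :
    cnt (fun g => S (g.val s)) u = cnt (fun g => S (g.val s)) v := by
  classical
  have key : ∀ w : GenP G B rB lB →₀ ℕ, cnt (fun g => S (g.val s)) w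
      = (Finsupp.mapDomain (fun g : GenP G B rB lB => g.val s) w).sum
          (fun y n => if S y then n else 0) := by
    intro w
    rw [Finsupp.sum_mapDomain_index (fun b => by simp)
      (fun b n1 n2 => by by_cases hS : S b <;> simp [hS])]
    rfl
  rw [key, key]
  rw [show Finsupp.mapDomain (fun g : GenP G B rB lB => g.val s) u
      = Finsupp.mapDomain (fun g : GenP G B rB lB => g.val s) v from congrFun h s]

/-- total degree of the exponent -/
def degF (u : GenP G B rB lB →₀ ℕ) : ℕ := u.sum fun _ n => n

theorem cnt_true (u : GenP G B rB lB →₀ ℕ) : cnt (fun _ => True) u = degF u := by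
  classical
  unfold cnt degF Finsupp.sum
  simp

theorem degF_eq_of_phi {u v : GenP G B rB lB →₀ ℕ} (h : Phi u = Phi v) :
    degF u = degF v := by
  have := cnt_transport h 0 (fun _ => True)
  rwa [cnt_true, cnt_true] at this

theorem pair_le_of_mem {a b : GenP G B rB lB} {u : GenP G B rB lB →₀ ℕ} (hab : a ≠ b)
    (ha : a ∈ u.support) (hb : b ∈ u.support) :
    Finsupp.single a 1 + Finsupp.single b 1 ≤ u := by
  rw [Finsupp.le_def]
  intro x
  rw [Finsupp.add_apply, Finsupp.single_apply, Finsupp.single_apply]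
  rcases eq_or_ne a x with rfl | hax
  · rw [if_pos rfl, if_neg (fun hba => hab hba.symm)]
    have := Finsupp.mem_support_iff.mp ha; omega
  · rw [if_neg hax]
    rcases eq_or_ne b x with rfl | hbx
    · rw [if_pos rfl]
      have := Finsupp.mem_support_iff.mp hb; omega
    · rw [if_neg hbx]; omega

/-- prefix agreement with a fixed generator -/
def pref (gs : GenP G B rB lB) (n : ℕ) (g : GenP G B rB lB) : Prop :=
  ∀ j : Fin (t+1), (j : ℕ) < n → g.val j = gs.val j

theorem crux {u v : GenP G B rB lB →₀ ℕ} (hm : Phi u = Phi v) (hnb : ¬ Bad u)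
    (gs : GenP G B rB lB) (hminu : ∀ p, p < gs → u p = 0)
    (hminv : ∀ p, p < gs → v p = 0) :
    u gs ≤ v gs := by
  have key : ∀ n : ℕ, cnt (pref gs n) u ≤ cnt (pref gs n) v := by
    intro n
    induction n with
    | zero =>
        have h1 : ∀ w : GenP G B rB lB →₀ ℕ, cnt (pref gs 0) w = degF w := by
          intro w
          rw [cnt_congr (Q := fun _ => True) (fun g => by simp [pref]), cnt_true]
        rw [h1, h1, degF_eq_of_phi hm]
    | succ n ih =>
        rcases lt_or_ge t n with htn | hnt
        · have hcongr : ∀ g, pref gs (n+1) g ↔ pref gs n g := by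
            intro g
            constructor
            · intro hp j hj; exact hp j (by have := j.isLt; omega)
            · intro hp j hj; exact hp j (by have := j.isLt; omega)
          rw [cnt_congr hcongr, cnt_congr hcongr]
          exact ih
        rcases Nat.eq_zero_or_pos n with hn0 | hn1
        · subst hn0
          have hcongr : ∀ w : GenP G B rB lB →₀ ℕ, cnt (pref gs 1) w
              = cnt (fun g : GenP G B rB lB => g.val 0 = gs.val 0) w := by
            intro w
            refine cnt_congr (fun g => ?_) w
            constructor
            · intro hp; exact hp 0 (by simp)
            · intro h0 j hj
              have hj0 : j = 0 := by
                apply Fin.ext; simpa using hj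
              rw [hj0]; exact h0
          rw [hcongr, hcongr]
          exact le_of_eq (cnt_transport hm 0 (fun y => y = gs.val 0))
        · -- main step
          set c : Fin t := ⟨n - 1, by omega⟩ with hc
          have hcval : (c : ℕ) = n - 1 := rfl
          have hsuccval : ((c.succ : Fin (t+1)) : ℕ) = n := by
            rw [Fin.val_succ, hcval]; omega
          have hcastval : ((c.castSucc : Fin (t+1)) : ℕ) = n - 1 := by
            rw [Fin.coe_castSucc, hcval]
          have hsucc_iff : ∀ g, pref gs (n+1) g ↔
              (pref gs n g ∧ g.val c.succ = gs.val c.succ) := by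
            intro g
            constructor
            · intro hp
              exact ⟨fun j hj => hp j (by omega), hp c.succ (by omega)⟩
            · rintro ⟨hp, hcoord⟩ j hj
              rcases Nat.lt_or_ge (j : ℕ) n with hlt | hge
              · exact hp j hlt
              · have hjeq : j = c.succ := by
                  apply Fin.ext; rw [hsuccval]; omega
                rw [hjeq]; exact hcoord
          have hsplit : ∀ w : GenP G B rB lB →₀ ℕ, (∀ p, p < gs → w p = 0) →
              cnt (pref gs n) w = cnt (pref gs (n+1)) w
                + cnt (fun g => pref gs n g ∧ gs.val c.succ < g.val c.succ) w := by
            intro w hw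
            rw [cnt_split (pref gs n) (fun g => g.val c.succ = gs.val c.succ) w]
            congr 1
            · exact cnt_congr (fun g => ⟨fun hg => (hsucc_iff g).mpr hg,
                fun hg => (hsucc_iff g).mp hg⟩) w
            · rw [cnt_split (fun g => pref gs n g ∧ ¬ g.val c.succ = gs.val c.succ)
                  (fun g => gs.val c.succ < g.val c.succ) w]
              have hz : cnt (fun g => (pref gs n g ∧ ¬ g.val c.succ = gs.val c.succ)
                  ∧ ¬ gs.val c.succ < g.val c.succ) w = 0 := by
                refine cnt_zero_of fun g hg => ?_
                obtain ⟨⟨hp, hne⟩, hnlt⟩ := hg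
                refine hw g (genP_lt_intro c.succ (fun j hj => hp j ?_) ?_)
                · have := Fin.lt_def.mp hj; omega
                · exact lt_of_le_of_ne (not_lt.mp hnlt) hne
              rw [hz, add_zero]
              refine cnt_congr (fun g => ?_) w
              constructor
              · rintro ⟨⟨hp, _⟩, hgt⟩; exact ⟨hp, hgt⟩
              · rintro ⟨hp, hgt⟩; exact ⟨⟨hp, ne_of_gt hgt⟩, hgt⟩
          have hTF_u : cnt (fun g => pref gs n g ∧ gs.val c.succ < g.val c.succ) u
              ≤ cnt (fun g => lB c (g.val c.succ) = rB c (gs.val c.castSucc)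
                  ∧ gs.val c.succ < g.val c.succ) u := by
            refine cnt_mono (fun g hg => ?_) u
            obtain ⟨hp, hgt⟩ := hg
            refine ⟨?_, hgt⟩
            rw [← g.2 c, hp c.castSucc (by omega)]
          have hTF_v : cnt (fun g => pref gs n g ∧ gs.val c.succ < g.val c.succ) v
              ≤ cnt (fun g => lB c (g.val c.succ) = rB c (gs.val c.castSucc)
                  ∧ gs.val c.succ < g.val c.succ) v := by
            refine cnt_mono (fun g hg => ?_) v
            obtain ⟨hp, hgt⟩ := hg
            refine ⟨?_, hgt⟩
            rw [← g.2 c, hp c.castSucc (by omega)]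
          have hFF : cnt (fun g => lB c (g.val c.succ) = rB c (gs.val c.castSucc)
                  ∧ gs.val c.succ < g.val c.succ) u
              = cnt (fun g => lB c (g.val c.succ) = rB c (gs.val c.castSucc)
                  ∧ gs.val c.succ < g.val c.succ) v :=
            cnt_transport hm c.succ
              (fun y => lB c y = rB c (gs.val c.castSucc) ∧ gs.val c.succ < y)
          by_cases hz : cnt (pref gs (n+1)) u = 0
          · rw [hz]; exact Nat.zero_le _
          · obtain ⟨h0, hh0supp, hh0⟩ := cnt_exists_pos hz
            have hh0pref : ∀ j : Fin (t+1), (j : ℕ) < n + 1 → h0.val j = gs.val j := hh0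
            have hFT : cnt (fun g => lB c (g.val c.succ) = rB c (gs.val c.castSucc)
                  ∧ gs.val c.succ < g.val c.succ) u
                ≤ cnt (fun g => pref gs n g ∧ gs.val c.succ < g.val c.succ) u := by
              refine cnt_mono' (fun g hgsupp hg => ?_)
              obtain ⟨hlab, hgt⟩ := hg
              refine ⟨?_, hgt⟩
              by_contra hnPn
              apply hnb
              have hex : ∃ j : Fin (t+1), (j : ℕ) < n ∧ g.val j ≠ gs.val j := by
                by_contra hcon; push_neg at hcon
                exact hnPn fun j hj => hcon j hj
              obtain ⟨j₀, hj₀n, hj₀ne, hj₀min⟩ := genP_exists_min_diff n hex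
              have hdir : gs.val j₀ < g.val j₀ := by
                rcases lt_or_gt_of_ne hj₀ne with hlt | hgt'
                · exfalso
                  exact absurd (hminu g (genP_lt_intro j₀ hj₀min hlt))
                    (Finsupp.mem_support_iff.mp hgsupp)
                · exact hgt'
              have hcross : rB c (h0.val c.castSucc) = rB c (g.val c.castSucc) := by
                rw [hh0pref c.castSucc (by omega),
                  show rB c (g.val c.castSucc) = lB c (g.val c.succ) from g.2 c, hlab]
              have hh0g : h0 < g := by
                refine genP_lt_intro j₀ (fun j hj => ?_) ?_
                · rw [hh0pref j (by have := Fin.lt_def.mp hj; omega), hj₀min j hj]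
                · rw [hh0pref j₀ (by omega)]; exact hdir
              have hh0p' : h0 < mix h0 g c hcross := by
                refine genP_lt_intro c.succ (fun j hj => ?_) ?_
                · rw [mix_val, if_pos (by have := Fin.lt_def.mp hj; omega)]
                · rw [mix_val, if_neg (by omega)]
                  rw [hh0pref c.succ (by omega)]; exact hgt
              have hh0q' : h0 < mix g h0 c hcross.symm := by
                refine genP_lt_intro j₀ (fun j hj => ?_) ?_
                · rw [mix_val, if_pos (by have := Fin.lt_def.mp hj; omega)]
                  rw [hh0pref j (by have := Fin.lt_def.mp hj; omega), hj₀min j hj]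
                · rw [mix_val, if_pos (by omega)]
                  rw [hh0pref j₀ (by omega)]; exact hdir
              refine ⟨h0, g, c, hcross,
                pair_le_of_mem hh0g.ne hh0supp hgsupp, ?_⟩
              refine Finsupp.Lex.lt_iff.mpr ⟨h0, ?_, ?_⟩
              · intro j hj
                have h1 : mix h0 g c hcross ≠ j := (hj.trans hh0p').ne'
                have h2 : mix g h0 c hcross.symm ≠ j := (hj.trans hh0q').ne'
                have h3 : h0 ≠ j := hj.ne'
                have h4 : g ≠ j := (hj.trans hh0g).ne'
                simp [Finsupp.single_apply, h1, h2, h3, h4]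
              · have h1 : mix h0 g c hcross ≠ h0 := hh0p'.ne'
                have h2 : mix g h0 c hcross.symm ≠ h0 := hh0q'.ne'
                have h4 : g ≠ h0 := hh0g.ne'
                simp [Finsupp.single_apply, h1, h2, h4]
            have e_u := hsplit u hminu
            have e_v := hsplit v hminv
            omega
  have htop : ∀ g, pref gs (t+1) g ↔ g = gs := by
    intro g
    constructor
    · intro hp; exact Subtype.ext (funext fun j => hp j j.isLt)
    · rintro rfl j _; rfl
  have hfin := key (t+1)
  rwa [cnt_congr htop, cnt_congr htop, cnt_eq_single, cnt_eq_single] at hfin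

theorem degF_add (a b : GenP G B rB lB →₀ ℕ) : degF (a + b) = degF a + degF b :=
  Finsupp.sum_add_index' (fun _ => rfl) (fun _ _ _ => rfl)

theorem degF_single (a : GenP G B rB lB) (k : ℕ) : degF (Finsupp.single a k) = k :=
  Finsupp.sum_single_index rfl

theorem degF_eq_zero {u : GenP G B rB lB →₀ ℕ} (h : degF u = 0) : u = 0 := by
  ext g
  simp only [Finsupp.coe_zero, Pi.zero_apply]
  by_cases hg : g ∈ u.support
  · have h1 : u g ≤ ∑ x ∈ u.support, u x :=
      Finset.single_le_sum (fun i _ => Nat.zero_le (u i)) hg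
    have h2 : degF u = ∑ x ∈ u.support, u x := rfl
    omega
  · simpa using Finsupp.notMem_support_iff.mp hg

theorem toLex_lt_of_ne_zero {u : GenP G B rB lB →₀ ℕ} (h : u ≠ 0) :
    toLex (0 : GenP G B rB lB →₀ ℕ) < toLex u := by
  have hne : u.support.Nonempty := Finsupp.support_nonempty_iff.mpr h
  refine Finsupp.Lex.lt_iff.mpr ⟨u.support.min' hne, ?_, ?_⟩
  · intro j hj
    have : j ∉ u.support := fun hmem => absurd (u.support.min'_le j hmem) (not_le.mpr hj)
    simp [Finsupp.notMem_support_iff.mp this]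
  · have := Finsupp.mem_support_iff.mp (u.support.min'_mem hne)
    simpa using Nat.pos_of_ne_zero this

theorem bad_mono {u w : GenP G B rB lB →₀ ℕ} (hle : u ≤ w) (h : Bad u) : Bad w := by
  obtain ⟨g, h', c, hc, hpair, hlex⟩ := h
  exact ⟨g, h', c, hc, hpair.trans hle, hlex⟩

theorem erase_le (a : GenP G B rB lB) (u : GenP G B rB lB →₀ ℕ) : u.erase a ≤ u := by
  rw [Finsupp.le_def]
  intro x
  rw [Finsupp.erase_apply]
  split_ifs <;> omega

/-- The main comparison: a non-`Bad` exponent is strictly smaller (in the monomial order)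
than any other exponent with the same marginals. -/
theorem main_lt : ∀ (d : ℕ) (u v : GenP G B rB lB →₀ ℕ), degF u ≤ d → ¬ Bad u →
    Phi u = Phi v → u ≠ v → toLex u < toLex v := by
  intro d
  induction d with
  | zero =>
      intro u v hd _ hm hne
      have hu0 : u = 0 := degF_eq_zero (Nat.le_zero.mp hd)
      subst hu0
      exact toLex_lt_of_ne_zero (fun hv => hne hv.symm)
  | succ d ih =>
      intro u v hd hnb hm hne
      by_cases hu0 : u = 0
      · subst hu0
        exact toLex_lt_of_ne_zero (fun hv => hne hv.symm)
      · have hSne : (u.support ∪ v.support).Nonempty :=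
          Finset.Nonempty.mono Finset.subset_union_left
            (Finsupp.support_nonempty_iff.mpr hu0)
        set gs := (u.support ∪ v.support).min' hSne with hgs
        have hminu : ∀ p, p < gs → u p = 0 := by
          intro p hp
          by_contra hp0
          have : p ∈ u.support ∪ v.support :=
            Finset.mem_union_left _ (Finsupp.mem_support_iff.mpr hp0)
          exact absurd ((u.support ∪ v.support).min'_le p this) (not_le.mpr hp)
        have hminv : ∀ p, p < gs → v p = 0 := by
          intro p hp
          by_contra hp0
          have : p ∈ u.support ∪ v.support :=
            Finset.mem_union_right _ (Finsupp.mem_support_iff.mpr hp0)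
          exact absurd ((u.support ∪ v.support).min'_le p this) (not_le.mpr hp)
        have hcr : u gs ≤ v gs := crux hm hnb gs hminu hminv
        rcases lt_or_eq_of_le hcr with hlt | heq
        · refine Finsupp.Lex.lt_iff.mpr ⟨gs, ?_, ?_⟩
          · intro j hj
            show u j = v j
            rw [hminu j hj, hminv j hj]
          · exact hlt
        · -- strip gs and recurse
          have hugs : u gs ≠ 0 := by
            intro h0
            have hmem := (u.support ∪ v.support).min'_mem hSne
            rw [← hgs] at hmem
            rcases Finset.mem_union.mp hmem with hmem | hmem
            · exact (Finsupp.mem_support_iff.mp hmem) h0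
            · exact (Finsupp.mem_support_iff.mp hmem) (heq ▸ h0)
          have hu' : u.erase gs + Finsupp.single gs (u gs) = u :=
            Finsupp.erase_add_single gs u
          have hv' : v.erase gs + Finsupp.single gs (v gs) = v :=
            Finsupp.erase_add_single gs v
          have hphi' : Phi (u.erase gs) = Phi (v.erase gs) := by
            funext s
            have h1 := congrFun hm s
            rw [Phi_apply, Phi_apply, ← hu', ← hv', Finsupp.mapDomain_add,
              Finsupp.mapDomain_add, Finsupp.mapDomain_single,
              Finsupp.mapDomain_single, heq] at h1
            exact add_right_cancel h1
          have hnb' : ¬ Bad (u.erase gs) := fun h => hnb (bad_mono (erase_le gs u) h)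
          have hne' : u.erase gs ≠ v.erase gs := by
            intro h
            apply hne
            rw [← hu', ← hv', h, heq]
          have hd' : degF (u.erase gs) ≤ d := by
            have := degF_add (u.erase gs) (Finsupp.single gs (u gs))
            rw [hu', degF_single] at this
            omega
          have hlt' := ih (u.erase gs) (v.erase gs) hd' hnb' hphi' hne'
          have := add_lt_add_left hlt' (toLex (Finsupp.single gs (u gs)))
          rw [← toLex_add, ← toLex_add, hu'] at this
          rw [show (Finsupp.single gs (u gs)) = Finsupp.single gs (v gs) from by rw [heq]] at this
          rw [hv'] at this
          exact this

theorem Phi_zero : Phi (0 : GenP G B rB lB →₀ ℕ) = 0 :=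
  funext fun _ => Finsupp.mapDomain_zero

theorem phi_single_add (a : GenP G B rB lB) (k : ℕ) (f : GenP G B rB lB →₀ ℕ) :
    Phi (Finsupp.single a k + f) = (k • embG G B rB lB a) + Phi f := by
  funext s
  simp only [Phi_apply, Finsupp.mapDomain_add, Finsupp.mapDomain_single, Pi.add_apply,
    Pi.smul_apply, embG, Finsupp.smul_single, smul_eq_mul, mul_one]

noncomputable def XGen (g : GenP G B rB lB) :
    AddMonoidAlgebra ℂ ((s : Fin (t + 1)) → (G s →₀ ℕ)) :=
  AddMonoidAlgebra.single (embG G B rB lB g) 1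

noncomputable def PhiS (u : GenP G B rB lB →₀ ℕ) :
    AddMonoidAlgebra ℂ ((s : Fin (t + 1)) → (G s →₀ ℕ)) :=
  AddMonoidAlgebra.single (Phi u) 1

theorem toric_prod (u : GenP G B rB lB →₀ ℕ) :
    (u.prod fun g n => XGen g ^ n) = PhiS u := by
  induction u using Finsupp.induction with
  | zero =>
      rw [Finsupp.prod_zero_index]
      show (1 : AddMonoidAlgebra ℂ ((s : Fin (t + 1)) → (G s →₀ ℕ))) = _
      rw [PhiS, Phi_zero, AddMonoidAlgebra.one_def]
  | single_add a k f hfa hk ih =>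
      rw [Finsupp.prod_add_index' (fun g => pow_zero _) (fun g m n => pow_add _ m n),
        Finsupp.prod_single_index (h := fun g n => XGen g ^ n) (pow_zero _), ih, PhiS, PhiS, XGen,
        AddMonoidAlgebra.single_pow, one_pow, AddMonoidAlgebra.single_mul_single, one_mul,
        phi_single_add]

theorem toricMap_monomial (u : GenP G B rB lB →₀ ℕ) (cc : ℂ) :
    toricMap G B rB lB (monomial u cc) = AddMonoidAlgebra.single (Phi u) cc := by
  show aeval _ (monomial u cc) = _
  rw [aeval_monomial]
  show (algebraMap ℂ (AddMonoidAlgebra ℂ ((s : Fin (t + 1)) → (G s →₀ ℕ)))) cc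
      * (u.prod fun g n => XGen g ^ n) = _
  rw [toric_prod, PhiS,
    show (algebraMap ℂ (AddMonoidAlgebra ℂ ((s : Fin (t + 1)) → (G s →₀ ℕ)))) cc
      = AddMonoidAlgebra.single 0 cc from by simp [AddMonoidAlgebra.coe_algebraMap],
    AddMonoidAlgebra.single_mul_single, zero_add, mul_one]

theorem exists_partner {f : MvPolynomial (GenP G B rB lB) ℂ}
    (hf : f ∈ RingHom.ker (toricMap G B rB lB).toRingHom)
    {u : GenP G B rB lB →₀ ℕ} (hu : u ∈ f.support) :
    ∃ v ∈ f.support, v ≠ u ∧ Phi v = Phi u := by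
  classical
  by_contra hcon
  push_neg at hcon
  have h0 : toricMap G B rB lB f = 0 := RingHom.mem_ker.mp hf
  nth_rewrite 1 [f.as_sum] at h0
  rw [map_sum, Finset.sum_congr rfl
    (fun w _ => toricMap_monomial w (coeff w f))] at h0
  have h2 : ∑ w ∈ f.support, (AddMonoidAlgebra.single (Phi w) (coeff w f) :
      AddMonoidAlgebra ℂ ((s : Fin (t + 1)) → (G s →₀ ℕ))).coeff (Phi u) = 0 := by
    rw [← Finsupp.finset_sum_apply, ← AddMonoidAlgebra.coeff_sum, h0]
    simp
  rw [Finset.sum_eq_single u (fun w hw hwne => by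
      rw [AddMonoidAlgebra.coeff_single, Finsupp.single_apply, if_neg (hcon w hw hwne)])
    (fun h => absurd hu h)] at h2
  rw [AddMonoidAlgebra.coeff_single, Finsupp.single_apply, if_pos rfl] at h2
  exact (MvPolynomial.mem_support_iff.mp hu) h2

theorem swap_mem_ker_aux :
    ∀ f ∈ swapPolys G B rB lB, f ∈ RingHom.ker (toricMap G B rB lB).toRingHom := by
  rintro f ⟨g, h, g', h', c, hc, hg', hh', rfl⟩
  rw [RingHom.mem_ker]
  show toricMap G B rB lB _ = 0
  have e1 : ∀ a b : GenP G B rB lB, (X a * X b : MvPolynomial (GenP G B rB lB) ℂ)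
      = monomial (Finsupp.single a 1 + Finsupp.single b 1) 1 := by
    intro a b
    rw [X, X, monomial_mul, one_mul]
  have key : Phi (Finsupp.single g 1 + Finsupp.single h 1)
      = Phi (Finsupp.single g' 1 + Finsupp.single h' 1) := by
    funext s
    simp only [Phi_apply, Finsupp.mapDomain_add, Finsupp.mapDomain_single, hg' s, hh' s]
    by_cases hsc : (s : ℕ) ≤ (c : ℕ)
    · rw [if_pos hsc, if_pos hsc]
    · rw [if_neg hsc, if_neg hsc, add_comm]
  rw [map_sub, e1, e1, toricMap_monomial, toricMap_monomial, key, sub_self]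

theorem pair_apply_le {g h : GenP G B rB lB} (hgh : g ≠ h) (a : GenP G B rB lB) :
    (Finsupp.single g 1 + Finsupp.single h 1 : GenP G B rB lB →₀ ℕ) a ≤ 1 := by
  classical
  rw [Finsupp.add_apply, Finsupp.single_apply, Finsupp.single_apply]
  rcases eq_or_ne g a with rfl | hga
  · rw [if_pos rfl, if_neg (fun hha => hgh hha.symm)]
    omega
  · rw [if_neg hga]
    split_ifs <;> omega

theorem pair_degree (g h : GenP G B rB lB) :
    ((Finsupp.single g 1 + Finsupp.single h 1 : GenP G B rB lB →₀ ℕ).sum fun _ e => e) = 2 := by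
  rw [Finsupp.sum_add_index' (fun _ => rfl) (fun _ _ _ => rfl),
    Finsupp.sum_single_index rfl, Finsupp.sum_single_index rfl]

theorem swap_deg_aux :
    ∀ f ∈ swapPolys G B rB lB, f.totalDegree ≤ 2 ∧ ∀ u ∈ f.support, ∀ g, u g ≤ 1 := by
  classical
  rintro f ⟨g, h, g', h', c, hc, hg', hh', rfl⟩
  by_cases hgh : g = h
  · have hg'g : g' = g := Subtype.ext (funext fun s => by
      rw [hg' s]; subst hgh; split <;> rfl)
    have hh'h : h' = h := Subtype.ext (funext fun s => by
      rw [hh' s]; subst hgh; split <;> rfl)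
    rw [hg'g, hh'h, sub_self]
    constructor
    · simp
    · intro u hu; simp at hu
  · have hg'h' : g' ≠ h' := by
      intro he
      apply hgh
      apply Subtype.ext; funext s
      have h1 := hg' s
      have h2 := hh' s
      rw [he, h2] at h1
      by_cases hsc : (s : ℕ) ≤ (c : ℕ)
      · rw [if_pos hsc, if_pos hsc] at h1; exact h1.symm
      · rw [if_neg hsc, if_neg hsc] at h1; exact h1
    have e1 : ∀ a b : GenP G B rB lB, (X a * X b : MvPolynomial (GenP G B rB lB) ℂ)
        = monomial (Finsupp.single a 1 + Finsupp.single b 1) 1 := by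
      intro a b
      rw [X, X, monomial_mul, one_mul]
    rw [e1, e1]
    have hsup : (monomial (Finsupp.single g 1 + Finsupp.single h 1) (1:ℂ)
        - monomial (Finsupp.single g' 1 + Finsupp.single h' 1) 1).support
        ⊆ {Finsupp.single g 1 + Finsupp.single h 1,
           Finsupp.single g' 1 + Finsupp.single h' 1} := by
      refine (MvPolynomial.support_sub _ _ _).trans ?_
      refine Finset.union_subset (fun x hx => ?_) (fun x hx => ?_)
      · rw [MvPolynomial.support_monomial, if_neg one_ne_zero] at hx
        simp only [Finset.mem_singleton] at hx
        simp [hx]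
      · rw [MvPolynomial.support_monomial, if_neg one_ne_zero] at hx
        simp only [Finset.mem_singleton] at hx
        simp [hx]
    constructor
    · rw [MvPolynomial.totalDegree]
      refine Finset.sup_le fun b hb => ?_
      rcases Finset.mem_insert.mp (hsup hb) with rfl | hb'
      · rw [pair_degree]
      · rw [Finset.mem_singleton.mp hb', pair_degree]
    · intro u hu a
      rcases Finset.mem_insert.mp (hsup hu) with rfl | hu'
      · exact pair_apply_le hgh a
      · rw [Finset.mem_singleton.mp hu']
        exact pair_apply_le hg'h' a

theorem lex_add_le_add_right {u v : GenP G B rB lB →₀ ℕ}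
    (h : toLex u ≤ toLex v) (w : GenP G B rB lB →₀ ℕ) :
    toLex (u + w) ≤ toLex (v + w) := by
  rw [toLex_add, toLex_add]
  exact add_le_add_left h (toLex w)

theorem lex_zero_le (u : GenP G B rB lB →₀ ℕ) :
    toLex (0 : GenP G B rB lB →₀ ℕ) ≤ toLex u := by
  rcases eq_or_ne u 0 with rfl | hu
  · exact le_refl _
  · exact le_of_lt (toLex_lt_of_ne_zero hu)


end Aux


theorem swap_groebner_basis :
    ∃ lin : LinearOrder ((GenP G B rB lB) →₀ ℕ),
      (∀ u v w, lin.le u v → lin.le (u + w) (v + w)) ∧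
      (∀ u, lin.le 0 u) ∧
      (∀ f ∈ swapPolys G B rB lB, f ∈ RingHom.ker (toricMap G B rB lB).toRingHom) ∧
      (∀ f ∈ swapPolys G B rB lB, f.totalDegree ≤ 2 ∧ ∀ u ∈ f.support, ∀ g, u g ≤ 1) ∧
      Ideal.span {q : MvPolynomial (GenP G B rB lB) ℂ |
          ∃ f ∈ swapPolys G B rB lB, f ≠ 0 ∧ ∃ u,
            (u ∈ f.support ∧ ∀ v ∈ f.support, lin.le v u) ∧ q = monomial u 1}
        = Ideal.span {q : MvPolynomial (GenP G B rB lB) ℂ |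
          ∃ f ∈ RingHom.ker (toricMap G B rB lB).toRingHom, f ≠ 0 ∧ ∃ u,
            (u ∈ f.support ∧ ∀ v ∈ f.support, lin.le v u) ∧ q = monomial u 1} := by
  classical
  letI ordG : ∀ s, LinearOrder (G s) := fun s => IsWellOrder.linearOrder WellOrderingRel
  refine ⟨LinearOrder.lift' (toLex : ((GenP G B rB lB) →₀ ℕ) → Lex ((GenP G B rB lB) →₀ ℕ))
      toLex.injective, ?_, ?_, ?_, ?_, ?_⟩
  · intro u v w h
    exact lex_add_le_add_right h w
  · intro u
    exact lex_zero_le u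
  · exact swap_mem_ker_aux
  · exact swap_deg_aux
  · apply le_antisymm
    · apply Ideal.span_mono
      rintro q ⟨f, hfs, hf0, uu, huu, rfl⟩
      exact ⟨f, swap_mem_ker_aux f hfs, hf0, uu, huu, rfl⟩
    · rw [Ideal.span_le]
      rintro q ⟨f, hker, hf0, uu, ⟨humem, hmax⟩, rfl⟩
      obtain ⟨vv, hvmem, hvne, hphiv⟩ := exists_partner hker humem
      have hbad : Bad uu := by
        by_contra hnb
        have hlt := main_lt (degF uu) uu vv le_rfl hnb hphiv.symm (Ne.symm hvne)
        exact absurd hlt (not_lt.mpr (hmax vv hvmem : toLex vv ≤ toLex uu))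
      obtain ⟨g, h, c, hc, hpairle, hlex⟩ := hbad
      set m := Finsupp.single g 1 + Finsupp.single h 1 with hm
      set m' := Finsupp.single (mix g h c hc) 1 + Finsupp.single (mix h g c hc.symm) 1 with hm'
      have e1 : ∀ a b : GenP G B rB lB, (X a * X b : MvPolynomial (GenP G B rB lB) ℂ)
          = monomial (Finsupp.single a 1 + Finsupp.single b 1) 1 := by
        intro a b; rw [X, X, monomial_mul, one_mul]
      have hmm' : m' ≠ m := by
        intro hh
        rw [hh] at hlex
        exact lt_irrefl _ hlex
      set f₀ : MvPolynomial (GenP G B rB lB) ℂ :=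
        X g * X h - X (mix g h c hc) * X (mix h g c hc.symm) with hf₀def
      have hf₀ : f₀ = monomial m 1 - monomial m' 1 := by
        rw [hf₀def, e1, e1]
      have hswap : f₀ ∈ swapPolys G B rB lB :=
        ⟨g, h, mix g h c hc, mix h g c hc.symm, c, hc, fun s => rfl, fun s => rfl, rfl⟩
      have hcoeffm : coeff m f₀ = 1 := by
        rw [hf₀, coeff_sub, coeff_monomial, coeff_monomial, if_pos rfl, if_neg hmm']
        ring
      have hf₀ne : f₀ ≠ 0 := fun h0 => by simp [h0] at hcoeffm
      have hmmem : m ∈ f₀.support :=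
        MvPolynomial.mem_support_iff.mpr (by rw [hcoeffm]; exact one_ne_zero)
      have hsup : f₀.support ⊆ {m, m'} := by
        rw [hf₀]
        refine (MvPolynomial.support_sub _ _ _).trans ?_
        refine Finset.union_subset (fun x hx => ?_) (fun x hx => ?_)
        · rw [MvPolynomial.support_monomial, if_neg one_ne_zero] at hx
          simp only [Finset.mem_singleton] at hx; simp [hx]
        · rw [MvPolynomial.support_monomial, if_neg one_ne_zero] at hx
          simp only [Finset.mem_singleton] at hx; simp [hx]
      have hdecomp : monomial uu (1:ℂ) = monomial (uu - m) 1 * monomial m 1 := by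
        rw [monomial_mul, one_mul, tsub_add_cancel_of_le hpairle]
      rw [hdecomp]
      refine Ideal.mul_mem_left _ _ (Ideal.subset_span ?_)
      refine ⟨f₀, hswap, hf₀ne, m, ⟨hmmem, fun w hw => ?_⟩, rfl⟩
      rcases Finset.mem_insert.mp (hsup hw) with hw1 | hw'
      · rw [hw1]
        exact le_refl (toLex m)
      · rw [Finset.mem_singleton.mp hw']
        exact le_of_lt hlex

end
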